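/- Let C be a category with classes W ⊆ V of morphisms, where V satisfies the weakened right-fractions conditions (identities; weak composition closure; squares; cancellation as in the weakened Gabriel–Zisman axioms), and W is weakly initial in V (for all v ∈ V there is u with v∘u ∈ W), contains identities, and is such that any morphism equal to a member of W is in W. Then the canonical functor C[W⁻¹] → C[V⁻¹] induced by the inclusion W ⊆ V is an equivalence of categories. -/

import Mathlib

open CategoryTheory

universe v u

theorem statement10 {C : Type u} [Category.{v} C] (V W : MorphismProperty C)
    (hV1 : ∀ X : C, V (𝟙 X))
    (hV2 : ∀ ⦃X Y Z : C⦄ (vm : X ⟶ Y) (wm : Y ⟶ Z), V vm → V wm →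
      ∃ (A : C) (u : A ⟶ X), V (u ≫ vm ≫ wm))
    (hV3 : ∀ ⦃X Y Z : C⦄ (wm : X ⟶ Y) (f : Z ⟶ Y), V wm →
      ∃ (P : C) (w' : P ⟶ Z) (f' : P ⟶ X), V w' ∧ f' ≫ wm = w' ≫ f)
    (hV4 : ∀ ⦃X Y Z : C⦄ (wm : X ⟶ Y) (f₁ f₂ : Z ⟶ X), V wm → f₁ ≫ wm = f₂ ≫ wm →
      ∃ (P : C) (w' : P ⟶ Z), V w' ∧ w' ≫ f₁ = w' ≫ f₂)
    (hsub : ∀ ⦃X Y : C⦄ (f : X ⟶ Y), W f → V f)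
    (hwi : ∀ ⦃X Y : C⦄ (f : X ⟶ Y), V f → ∃ (Z : C) (u : Z ⟶ X), W (u ≫ f))
    (hW1 : ∀ X : C, W (𝟙 X)) :
    (Localization.lift V.Q
      (fun _ _ f hf => Localization.inverts V.Q V f (hsub f hf)) W.Q).IsEquivalence := by
  -- Step 1: W.Q inverts all of V.
  have hinv : V.IsInvertedBy W.Q := by
    intro X Y vm hv
    obtain ⟨Z, u, hs⟩ := hwi vm hv
    obtain ⟨P, w', f', hw', heq⟩ := hV3 (u ≫ vm) vm (hsub _ hs)
    obtain ⟨P', w'', hw'', heq2⟩ := hV4 vm w' (f' ≫ u) hv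
      (by rw [← heq, Category.assoc])
    obtain ⟨A, a, ha⟩ := hV2 w'' w' hw'' hw'
    obtain ⟨B, b, hb⟩ := hwi _ ha
    have hgu : W ((b ≫ a ≫ w'' ≫ f') ≫ u) := by
      have h : (b ≫ a ≫ w'' ≫ f') ≫ u = b ≫ a ≫ w'' ≫ w' := by
        simp only [Category.assoc]
        rw [← heq2]
      rw [h]
      exact hb
    have i1 : IsIso (W.Q.map (b ≫ a ≫ w'' ≫ f') ≫ W.Q.map u) := by
      rw [← W.Q.map_comp]
      exact Localization.inverts W.Q W _ hgu
    have i2 : IsIso (W.Q.map u ≫ W.Q.map vm) := by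
      rw [← W.Q.map_comp]
      exact Localization.inverts W.Q W _ hs
    -- 2-out-of-6 for isomorphisms
    have hu : IsIso (W.Q.map u) := by
      obtain ⟨e, he⟩ : ∃ e : W.Q.obj X ⟶ W.Q.obj Z, e ≫ W.Q.map u = 𝟙 _ :=
        ⟨inv (W.Q.map (b ≫ a ≫ w'' ≫ f') ≫ W.Q.map u) ≫ W.Q.map (b ≫ a ≫ w'' ≫ f'),
          by rw [Category.assoc, IsIso.inv_hom_id]⟩
      obtain ⟨r, hr⟩ : ∃ r : W.Q.obj X ⟶ W.Q.obj Z, W.Q.map u ≫ r = 𝟙 _ :=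
        ⟨W.Q.map vm ≫ inv (W.Q.map u ≫ W.Q.map vm),
          by rw [← Category.assoc, IsIso.hom_inv_id]⟩
      have key : e = r := by
        rw [← Category.comp_id e, ← hr, ← Category.assoc, he, Category.id_comp]
      exact ⟨r, hr, by rw [← key]; exact he⟩
    exact IsIso.of_isIso_comp_left (W.Q.map u) (W.Q.map vm)
  -- Step 2: build the inverse functor and the equivalence.
  have hWinv : W.IsInvertedBy V.Q := fun _ _ f hf => Localization.inverts V.Q V f (hsub f hf)
  let L : W.Localization ⥤ V.Localization := Localization.lift V.Q hWinv W.Q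
  let M : V.Localization ⥤ W.Localization := Localization.lift W.Q hinv V.Q
  have e1 : W.Q ⋙ L ≅ V.Q := Localization.fac V.Q hWinv W.Q
  have e2 : V.Q ⋙ M ≅ W.Q := Localization.fac W.Q hinv V.Q
  have eLM : W.Q ⋙ (L ⋙ M) ≅ W.Q :=
    (Functor.associator _ _ _).symm ≪≫ Functor.isoWhiskerRight e1 M ≪≫ e2
  have eML : V.Q ⋙ (M ⋙ L) ≅ V.Q :=
    (Functor.associator _ _ _).symm ≪≫ Functor.isoWhiskerRight e2 L ≪≫ e1
  letI : Localization.Lifting W.Q W W.Q (L ⋙ M) := ⟨eLM⟩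
  letI : Localization.Lifting V.Q V V.Q (M ⋙ L) := ⟨eML⟩
  have η : L ⋙ M ≅ 𝟭 _ :=
    Localization.liftNatIso W.Q W W.Q W.Q (L ⋙ M) (𝟭 _) (Iso.refl _)
  have ε : M ⋙ L ≅ 𝟭 _ :=
    Localization.liftNatIso V.Q V V.Q V.Q (M ⋙ L) (𝟭 _) (Iso.refl _)
  exact (CategoryTheory.Equivalence.mk L M η.symm ε).isEquivalence_functor
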